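/- Fix m with 0 < m < 2, and for γ > 0 set u_±(γ) = −(1 + 1/γ) ± √(1 + γm²)/γ and k(γ) = (u_+(γ) − u_−(γ))/(1 − u_−(γ)). Then, as γ → 0⁺: u_+(γ) → m²/2 − 1, u_−(γ) → −∞, and k(γ) → 1. Thus in the inextensibility limit the homoclinic data of the extensible rod recover those of the Kirchhoff rod. -/

import Mathlib

open Real Filter

/-- Fix `0 < m < 2`. With `u_±(γ) = −(1 + 1/γ) ± √(1 + γm²)/γ` and
`k(γ) = (u_+(γ) − u_−(γ))/(1 − u_−(γ))`, one has, as `γ → 0⁺`: `u_+(γ) → m²/2 − 1`,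
`u_−(γ) → −∞` and `k(γ) → 1`; in the inextensibility limit the homoclinic data of the
extensible rod recover those of the Kirchhoff rod. -/
theorem inextensible_limit_of_homoclinic_data (m : ℝ) (hm₀ : 0 < m) (hm₂ : m < 2)
    (uplus uminus k : ℝ → ℝ)
    (hup : ∀ γ, uplus γ = -(1 + 1 / γ) + Real.sqrt (1 + γ * m ^ 2) / γ)
    (hum : ∀ γ, uminus γ = -(1 + 1 / γ) - Real.sqrt (1 + γ * m ^ 2) / γ)
    (hk : ∀ γ, k γ = (uplus γ - uminus γ) / (1 - uminus γ)) :
    Tendsto uplus (nhdsWithin 0 (Set.Ioi 0)) (nhds (m ^ 2 / 2 - 1)) ∧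
    Tendsto uminus (nhdsWithin 0 (Set.Ioi 0)) atBot ∧
    Tendsto k (nhdsWithin 0 (Set.Ioi 0)) (nhds 1) := by
  set s : ℝ → ℝ := fun γ => Real.sqrt (1 + γ * m ^ 2) with hs_def
  have hs : Tendsto s (nhdsWithin 0 (Set.Ioi 0)) (nhds 1) := by
    have hc : Continuous s := by
      continuity
    have h0 : s 0 = 1 := by simp [hs_def]
    have := hc.tendsto 0
    rw [h0] at this
    exact this.mono_left nhdsWithin_le_nhds
  -- facts on Ioi 0
  have key : ∀ γ ∈ Set.Ioi (0:ℝ), (s γ) ^ 2 = 1 + γ * m ^ 2 := by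
    intro γ hγ
    have hγ0 : (0:ℝ) < γ := hγ
    have harg : (0:ℝ) ≤ 1 + γ * m ^ 2 := by positivity
    simpa [hs_def] using Real.sq_sqrt harg
  have hsnn : ∀ γ, 0 ≤ s γ := fun γ => Real.sqrt_nonneg _
  -- uplus limit
  have h1 : Tendsto uplus (nhdsWithin 0 (Set.Ioi 0)) (nhds (m ^ 2 / 2 - 1)) := by
    have heq : ∀ γ ∈ Set.Ioi (0:ℝ), uplus γ = m ^ 2 / (s γ + 1) - 1 := by
      intro γ hγ
      have hγ0 : (0:ℝ) < γ := hγ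
      have hs1 : s γ + 1 > 0 := by have := hsnn γ; linarith
      rw [hup]
      have hsq := key γ hγ
      field_simp
      nlinarith [hsq]
    have hlim : Tendsto (fun γ => m ^ 2 / (s γ + 1) - 1)
        (nhdsWithin 0 (Set.Ioi 0)) (nhds (m ^ 2 / 2 - 1)) := by
      have : Tendsto (fun γ => s γ + 1) (nhdsWithin 0 (Set.Ioi 0)) (nhds 2) := by
        have := hs.add (tendsto_const_nhds (x := (1:ℝ)))
        norm_num at this
        exact this
      exact (tendsto_const_nhds.div this (by norm_num)).sub tendsto_const_nhds
    exact hlim.congr' (eventually_nhdsWithin_of_forall fun γ hγ => (heq γ hγ).symm)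
  -- uminus limit
  have h2 : Tendsto uminus (nhdsWithin 0 (Set.Ioi 0)) atBot := by
    have hbound : ∀ᶠ γ in nhdsWithin 0 (Set.Ioi 0), uminus γ ≤ -(1 / γ) := by
      refine eventually_nhdsWithin_of_forall fun γ hγ => ?_
      have hγ0 : (0:ℝ) < γ := hγ
      rw [hum]
      have : 0 ≤ s γ / γ := div_nonneg (hsnn γ) hγ0.le
      linarith
    have hlim : Tendsto (fun γ : ℝ => -(1 / γ)) (nhdsWithin 0 (Set.Ioi 0)) atBot := by
      have : Tendsto (fun γ : ℝ => 1 / γ) (nhdsWithin 0 (Set.Ioi 0)) atTop := by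
        simpa using tendsto_inv_nhdsGT_zero
      exact tendsto_neg_atBot_iff.mpr this
    exact tendsto_atBot_mono' _ hbound hlim
  refine ⟨h1, h2, ?_⟩
  -- k limit
  have heq : ∀ γ ∈ Set.Ioi (0:ℝ), k γ = 2 * s γ / (2 * γ + 1 + s γ) := by
    intro γ hγ
    have hγ0 : (0:ℝ) < γ := hγ
    have hden : 2 * γ + 1 + s γ > 0 := by have := hsnn γ; linarith
    have e1 : uplus γ - uminus γ = 2 * s γ / γ := by rw [hup, hum]; ring
    have e2 : 1 - uminus γ = (2 * γ + 1 + s γ) / γ := by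
      rw [hum]; field_simp; ring
    rw [hk, e1, e2]
    rw [div_div_div_comm, div_self hγ0.ne', div_one]
  have hlim : Tendsto (fun γ => 2 * s γ / (2 * γ + 1 + s γ))
      (nhdsWithin 0 (Set.Ioi 0)) (nhds 1) := by
    have hnum : Tendsto (fun γ => 2 * s γ) (nhdsWithin 0 (Set.Ioi 0)) (nhds 2) := by
      simpa using hs.const_mul 2
    have hγid : Tendsto (fun γ : ℝ => γ) (nhdsWithin 0 (Set.Ioi 0)) (nhds 0) :=
      tendsto_id.mono_left nhdsWithin_le_nhds
    have hden : Tendsto (fun γ => 2 * γ + 1 + s γ) (nhdsWithin 0 (Set.Ioi 0)) (nhds 2) := by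
      have h' : Tendsto (fun γ : ℝ => 2 * γ + 1 + s γ) (nhdsWithin 0 (Set.Ioi 0))
          (nhds (2 * 0 + 1 + 1)) :=
        ((hγid.const_mul 2).add (tendsto_const_nhds (x := (1:ℝ)))).add hs
      norm_num at h'
      exact h'
    have := hnum.div hden (by norm_num)
    rw [show (2:ℝ) / 2 = 1 by norm_num] at this
    exact this
  exact hlim.congr' (eventually_nhdsWithin_of_forall fun γ hγ => (heq γ hγ).symm)
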